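/- Let α ∈ (0,1] and μ, ν, c ∈ ℝ with μ ≠ 1, ν ≠ 1, c ≠ 1, and c, c−1 not nonpositive integers. For x > 0 with |x^α| < 1, the conformable fractional integral I_α f(x) = ∫_0^x t^{α−1} f(t) dt satisfies I_α[ ₂F₁(μ, ν; c; x^α) ] = ((c−1)/(α(μ−1)(ν−1))) · [ ₂F₁(μ−1, ν−1; c−1; x^α) − 1 ]. -/

import Mathlib

open scoped Real BigOperators
open Filter MeasureTheory Set

noncomputable def poch (b : ℝ) (n : ℕ) : ℝ := (ascPochhammer ℝ n).eval b

noncomputable def F21 (μ ν c z : ℝ) : ℝ :=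
  ∑' n : ℕ, poch μ n * poch ν n / (poch c n * (n.factorial : ℝ)) * z ^ n

noncomputable def confD (α : ℝ) (f : ℝ → ℝ) : ℝ → ℝ :=
  fun x => x ^ (1 - α) * deriv f x

noncomputable def theta (α : ℝ) (f : ℝ → ℝ) : ℝ → ℝ :=
  fun x => (1 / α) * x ^ α * confD α f x

lemma poch_zero (b : ℝ) : poch b 0 = 1 := by simp [poch]

lemma poch_succ (b : ℝ) (n : ℕ) : poch b (n + 1) = poch b n * (b + n) :=
  ascPochhammer_succ_eval n b

lemma poch_succ_left (b : ℝ) (n : ℕ) : poch b (n + 1) = b * poch (b + 1) n := by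
  simp [poch, ascPochhammer_succ_left, Polynomial.eval_mul, Polynomial.eval_comp]

lemma poch_ne_zero {c : ℝ} (hc : ∀ k : ℕ, c ≠ -(k : ℝ)) (n : ℕ) : poch c n ≠ 0 := by
  induction n with
  | zero => simp [poch_zero]
  | succ n ih =>
    rw [poch_succ]
    refine mul_ne_zero ih fun h => hc n (by linarith)

lemma ratio_tendsto (μ : ℝ) : Tendsto (fun n : ℕ => (μ + n) / ((n : ℝ) + 1)) atTop (nhds 1) := by
  have h : ∀ n : ℕ, (μ + n) / ((n : ℝ) + 1) = 1 + (μ - 1) * (1 / ((n : ℝ) + 1)) := by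
    intro n
    have hn : ((n : ℝ) + 1) ≠ 0 := by positivity
    field_simp
    ring
  simp_rw [h]
  have := tendsto_one_div_add_atTop_nhds_zero_nat (𝕜 := ℝ)
  simpa using tendsto_const_nhds.add (this.const_mul (μ - 1))

lemma term_summable {c : ℝ} (hc : ∀ k : ℕ, c ≠ -(k : ℝ)) (μ ν z : ℝ) (hz : |z| < 1) :
    Summable (fun n : ℕ => poch μ n * poch ν n / (poch c n * (n.factorial : ℝ)) * z ^ n) := by
  set t : ℕ → ℝ := fun n => poch μ n * poch ν n / (poch c n * (n.factorial : ℝ)) * z ^ n with ht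
  set q : ℕ → ℝ := fun n => (μ + n) * (ν + n) * z / ((c + n) * ((n : ℝ) + 1)) with hq
  have hcn : ∀ n : ℕ, c + (n : ℝ) ≠ 0 := fun n h => hc n (by linarith)
  have key : ∀ n : ℕ, t (n + 1) = t n * q n := by
    intro n
    have h1 : poch c n ≠ 0 := poch_ne_zero hc n
    have h2 : (((n + 1 : ℕ)).factorial : ℝ) = ((n : ℝ) + 1) * (n.factorial : ℝ) := by
      push_cast [Nat.factorial_succ]; ring
    have h3 : (n.factorial : ℝ) ≠ 0 := Nat.cast_ne_zero.mpr n.factorial_ne_zero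
    have h4 : ((n : ℝ) + 1) ≠ 0 := by positivity
    simp only [ht, hq, poch_succ, h2, pow_succ]
    field_simp
  have hqt : Tendsto q atTop (nhds z) := by
    have heq : ∀ n : ℕ, q n = z * (((μ + n) / ((n : ℝ) + 1)) * (((ν + n) / ((n : ℝ) + 1)) / ((c + n) / ((n : ℝ) + 1)))) := by
      intro n
      have h4 : ((n : ℝ) + 1) ≠ 0 := by positivity
      simp only [hq]
      field_simp
    have h1 := ratio_tendsto μ
    have h2 := (ratio_tendsto ν).div (ratio_tendsto c) one_ne_zero
    have hT := (h1.mul (by simpa using h2)).const_mul z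
    have hT' : Tendsto (fun n : ℕ => z * (((μ + n) / ((n : ℝ) + 1)) * (((ν + n) / ((n : ℝ) + 1)) / ((c + n) / ((n : ℝ) + 1))))) atTop (nhds z) := by simpa using hT
    exact Filter.Tendsto.congr (fun n => (heq n).symm) hT'
  have habs : Tendsto (fun n => |q n|) atTop (nhds |z|) := hqt.abs
  have hr1 : (1 + |z|) / 2 < 1 := by linarith
  have hev : ∀ᶠ n in atTop, |q n| ≤ (1 + |z|) / 2 := habs.eventually_le_const (by linarith)
  refine summable_of_ratio_norm_eventually_le hr1 ?_
  filter_upwards [hev] with n hn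
  rw [key n, Real.norm_eq_abs, Real.norm_eq_abs, abs_mul]
  calc |t n| * |q n| ≤ |t n| * ((1 + |z|) / 2) := by
        exact mul_le_mul_of_nonneg_left hn (abs_nonneg _)
    _ = (1 + |z|) / 2 * |t n| := mul_comm _ _

theorem stmt15 (α : ℝ) (hα : α ∈ Set.Ioc (0:ℝ) 1) (μ ν c : ℝ)
    (hμ : μ ≠ 1) (hν : ν ≠ 1) (hc1 : c ≠ 1)
    (hc : ∀ k : ℕ, c ≠ -(k : ℝ)) (hc' : ∀ k : ℕ, c - 1 ≠ -(k : ℝ))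
    (x : ℝ) (hx : 0 < x) (hx1 : |x ^ α| < 1) :
    ∫ t in (0:ℝ)..x, t ^ (α - 1) * F21 μ ν c (t ^ α)
      = ((c - 1) / (α * (μ - 1) * (ν - 1)))
        * (F21 (μ - 1) (ν - 1) (c - 1) (x ^ α) - 1) := by
  obtain ⟨hα0, hα1⟩ := hα
  have hα0' : α ≠ 0 := ne_of_gt hα0
  set z := x ^ α with hzdef
  have hz0 : 0 < z := Real.rpow_pos_of_pos hx α
  have hz1 : z < 1 := by rwa [abs_of_pos hz0] at hx1
  set a : ℕ → ℝ := fun n => poch μ n * poch ν n / (poch c n * (n.factorial : ℝ)) with ha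
  set b : ℕ → ℝ := fun n =>
    poch (μ - 1) n * poch (ν - 1) n / (poch (c - 1) n * (n.factorial : ℝ)) with hb
  set C : ℝ := (c - 1) / (α * (μ - 1) * (ν - 1)) with hC
  set f : ℕ → ℝ → ℝ := fun n t => a n * t ^ (α * ((n : ℝ) + 1) - 1) with hf
  have hexp : ∀ n : ℕ, (-1 : ℝ) < α * ((n : ℝ) + 1) - 1 := by
    intro n
    have h : (0 : ℝ) < α * ((n : ℝ) + 1) := by positivity
    linarith
  have hint : ∀ n : ℕ, IntegrableOn (f n) (Ioc 0 x) := by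
    intro n
    have h := (intervalIntegral.intervalIntegrable_rpow' (hexp n) (a := 0) (b := x)).const_mul (a n)
    exact (intervalIntegrable_iff_integrableOn_Ioc_of_le hx.le).mp h
  have hbase : ∀ (d : ℝ) (n : ℕ),
      ∫ t in Ioc (0:ℝ) x, d * t ^ (α * ((n : ℝ) + 1) - 1) = d * (z ^ (n + 1) / (α * ((n : ℝ) + 1))) := by
    intro d n
    rw [← intervalIntegral.integral_of_le hx.le, intervalIntegral.integral_const_mul,
      integral_rpow (Or.inl (hexp n))]
    have h1 : α * ((n : ℝ) + 1) - 1 + 1 = α * ((n : ℝ) + 1) := by ring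
    rw [h1, Real.zero_rpow (by positivity)]
    have h3 : x ^ (α * ((n : ℝ) + 1)) = z ^ (n + 1) := by
      rw [Real.rpow_mul hx.le, ← Real.rpow_natCast (x ^ α) (n + 1)]
      push_cast
      ring_nf
    rw [h3]
    ring
  have hval : ∀ n : ℕ, ∫ t in Ioc (0:ℝ) x, f n t = a n * (z ^ (n + 1) / (α * ((n : ℝ) + 1))) :=
    fun n => hbase (a n) n
  have hnorm : ∀ n : ℕ,
      ∫ t in Ioc (0:ℝ) x, ‖f n t‖ = |a n| * (z ^ (n + 1) / (α * ((n : ℝ) + 1))) := by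
    intro n
    rw [setIntegral_congr_fun measurableSet_Ioc (g := fun t => |a n| * t ^ (α * ((n : ℝ) + 1) - 1))
      (fun t ht => by
        rw [Real.norm_eq_abs, abs_mul, abs_of_nonneg (Real.rpow_nonneg ht.1.le _)])]
    exact hbase (|a n|) n
  have hsum_t : Summable (fun n : ℕ => a n * z ^ n) := term_summable hc μ ν z hx1
  have hsum_abs : Summable (fun n : ℕ => |a n * z ^ n|) := hsum_t.abs
  have hsumI : Summable (fun n : ℕ => |a n| * (z ^ (n + 1) / (α * ((n : ℝ) + 1)))) := by
    refine Summable.of_nonneg_of_le (fun n => by positivity) (fun n => ?_)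
      (hsum_abs.mul_left (z / α))
    have h1 : α ≤ α * ((n : ℝ) + 1) := by nlinarith [(n.cast_nonneg : (0:ℝ) ≤ n)]
    have h2 : z ^ (n + 1) / (α * ((n : ℝ) + 1)) ≤ z ^ (n + 1) / α :=
      div_le_div_of_nonneg_left (pow_nonneg hz0.le _) hα0 h1
    calc |a n| * (z ^ (n + 1) / (α * ((n : ℝ) + 1)))
        ≤ |a n| * (z ^ (n + 1) / α) := mul_le_mul_of_nonneg_left h2 (abs_nonneg _)
      _ = z / α * |a n * z ^ n| := by
          rw [abs_mul, abs_pow, abs_of_pos hz0, pow_succ]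
          ring
  have hmeas : ∀ n : ℕ, AEStronglyMeasurable (f n) (volume.restrict (Ioc 0 x)) :=
    fun n => (hint n).aestronglyMeasurable
  have hlint : ∑' n : ℕ, ∫⁻ t in Ioc (0:ℝ) x, ‖f n t‖₊ ≠ ⊤ := by
    have h1 : ∀ n : ℕ, ∫⁻ t in Ioc (0:ℝ) x, ‖f n t‖₊
        = ENNReal.ofReal (|a n| * (z ^ (n + 1) / (α * ((n : ℝ) + 1)))) := by
      intro n
      rw [← hnorm n]
      exact (MeasureTheory.ofReal_integral_norm_eq_lintegral_enorm (hint n)).symm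
    simp_rw [h1]
    rw [← ENNReal.ofReal_tsum_of_nonneg (fun n => by positivity) hsumI]
    exact ENNReal.ofReal_ne_top
  have hswap := MeasureTheory.integral_tsum hmeas hlint
  have heq : ∀ t ∈ Ioc (0:ℝ) x, t ^ (α - 1) * F21 μ ν c (t ^ α) = ∑' n : ℕ, f n t := by
    intro t ht
    have ht0 : 0 < t := ht.1
    rw [F21, ← tsum_mul_left]
    refine tsum_congr fun n => ?_
    have h1 : (t ^ α) ^ n = t ^ (α * n) := by
      rw [← Real.rpow_natCast (t ^ α) n, ← Real.rpow_mul ht0.le]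
    calc t ^ (α - 1) * (a n * (t ^ α) ^ n) = a n * (t ^ (α - 1) * t ^ (α * n)) := by
          rw [h1]; ring
      _ = a n * t ^ (α - 1 + α * n) := by rw [← Real.rpow_add ht0]
      _ = f n t := by
          rw [hf]
          norm_num
          rw [show α - 1 + α * n = α * ((n : ℝ) + 1) - 1 by ring]
          exact Or.inl rfl
  -- coefficient identity
  have hμ1 : μ - 1 ≠ 0 := sub_ne_zero.mpr hμ
  have hν1 : ν - 1 ≠ 0 := sub_ne_zero.mpr hν
  have hcc1 : c - 1 ≠ 0 := sub_ne_zero.mpr hc1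
  have termeq : ∀ n : ℕ,
      a n * (z ^ (n + 1) / (α * ((n : ℝ) + 1))) = C * (b (n + 1) * z ^ (n + 1)) := by
    intro n
    have hpμ : poch (μ - 1) (n + 1) = (μ - 1) * poch μ n := by
      have h := poch_succ_left (μ - 1) n
      rwa [sub_add_cancel] at h
    have hpν : poch (ν - 1) (n + 1) = (ν - 1) * poch ν n := by
      have h := poch_succ_left (ν - 1) n
      rwa [sub_add_cancel] at h
    have hpc : poch (c - 1) (n + 1) = (c - 1) * poch c n := by
      have h := poch_succ_left (c - 1) n
      rwa [sub_add_cancel] at h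
    have hfac : (((n + 1 : ℕ)).factorial : ℝ) = ((n : ℝ) + 1) * (n.factorial : ℝ) := by
      push_cast [Nat.factorial_succ]; ring
    have h3 : (n.factorial : ℝ) ≠ 0 := Nat.cast_ne_zero.mpr n.factorial_ne_zero
    have h4 : ((n : ℝ) + 1) ≠ 0 := by positivity
    have h5 : poch c n ≠ 0 := poch_ne_zero hc n
    simp only [ha, hb, hC, hpμ, hpν, hpc, hfac]
    field_simp
  have hsum_b : Summable (fun n : ℕ => b n * z ^ n) := term_summable hc' (μ - 1) (ν - 1) z hx1
  have hF : F21 (μ - 1) (ν - 1) (c - 1) z - 1 = ∑' n : ℕ, b (n + 1) * z ^ (n + 1) := by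
    have h0 : b 0 * z ^ 0 = 1 := by
      simp [hb, poch_zero]
    rw [show F21 (μ - 1) (ν - 1) (c - 1) z = ∑' n : ℕ, b n * z ^ n from rfl,
      hsum_b.tsum_eq_zero_add, h0]
    ring
  calc ∫ t in (0:ℝ)..x, t ^ (α - 1) * F21 μ ν c (t ^ α)
      = ∫ t in Ioc (0:ℝ) x, ∑' n : ℕ, f n t := by
        rw [intervalIntegral.integral_of_le hx.le]
        exact setIntegral_congr_fun measurableSet_Ioc heq
    _ = ∑' n : ℕ, ∫ t in Ioc (0:ℝ) x, f n t := hswap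
    _ = ∑' n : ℕ, C * (b (n + 1) * z ^ (n + 1)) := by
        refine tsum_congr fun n => ?_
        rw [hval n, termeq n]
    _ = C * ∑' n : ℕ, b (n + 1) * z ^ (n + 1) := tsum_mul_left
    _ = ((c - 1) / (α * (μ - 1) * (ν - 1))) * (F21 (μ - 1) (ν - 1) (c - 1) (x ^ α) - 1) := by
        rw [← hF]
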